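/- There exists a constant C > 0 such that for every integer n ≥ 3, d(n) ≤ exp(C·log n / log log n). -/

import Mathlib

/-- `d n` is the number of positive divisors of `n`. -/
noncomputable def dd (n : ℕ) : ℕ := n.divisors.card

/-- small prime bound -/
lemma aux_small (t : ℝ) (ht : 1 ≤ t) (a : ℕ) (p : ℕ) (hp : 2 ≤ p) :
    (a + 1 : ℝ) ≤ 2 * t * (p : ℝ) ^ ((a : ℝ) / t) := by
  have h2 : (2:ℝ) ≤ (p:ℝ) := by exact_mod_cast hp
  have hrp : (2:ℝ) ^ ((a:ℝ)/t) ≤ (p:ℝ) ^ ((a:ℝ)/t) :=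
    Real.rpow_le_rpow (by norm_num) h2 (by positivity)
  have hc : (0:ℝ) < Real.log 2 / t := by
    have := Real.log_pos (by norm_num : (1:ℝ) < 2); positivity
  have hc1 : Real.log 2 / t ≤ 1 := by
    have := Real.log_two_lt_d9
    rw [div_le_one (by linarith)]; linarith
  have key : (a + 1 : ℝ) * (Real.log 2 / t) ≤ 1 + (a : ℝ) * (Real.log 2 / t) := by
    have ha : (0:ℝ) ≤ a := Nat.cast_nonneg a
    nlinarith
  have hexp : 1 + (a:ℝ) * (Real.log 2 / t) ≤ (2:ℝ) ^ ((a:ℝ)/t) := by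
    rw [Real.rpow_def_of_pos (by norm_num)]
    have h1 := Real.add_one_le_exp (Real.log 2 * ((a:ℝ)/t))
    have h2' : (a:ℝ) * (Real.log 2 / t) = Real.log 2 * ((a:ℝ)/t) := by ring
    linarith
  have h1c : (a+1:ℝ) ≤ (t / Real.log 2) * (2:ℝ) ^ ((a:ℝ)/t) := by
    have := key.trans hexp
    rw [div_mul_eq_mul_div, le_div_iff₀ (Real.log_pos (by norm_num))]
    calc (a+1:ℝ) * Real.log 2 = ((a+1) * (Real.log 2 / t)) * t := by field_simp
    _ ≤ (2:ℝ) ^ ((a:ℝ)/t) * t := mul_le_mul_of_nonneg_right this (by linarith)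
    _ = t * (2:ℝ) ^ ((a:ℝ)/t) := by ring
  have ht2 : t / Real.log 2 ≤ 2 * t := by
    rw [div_le_iff₀ (Real.log_pos (by norm_num))]
    nlinarith [Real.log_two_gt_d9]
  calc (a+1:ℝ) ≤ (t / Real.log 2) * (2:ℝ) ^ ((a:ℝ)/t) := h1c
  _ ≤ 2 * t * (p:ℝ) ^ ((a:ℝ)/t) :=
      mul_le_mul ht2 hrp (by positivity) (by linarith)

/-- large prime bound -/
lemma aux_large (t : ℝ) (ht : 1 ≤ t) (a : ℕ) (ha : 1 ≤ a) (p : ℕ)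
    (hp : (2:ℝ) ^ t ≤ (p:ℝ)) :
    (a + 1 : ℝ) ≤ (p : ℝ) ^ ((a : ℝ) / t) := by
  have htpos : (0:ℝ) < t := by linarith
  have hppos : (0:ℝ) < (p:ℝ) := lt_of_lt_of_le (by positivity) hp
  have h2a : (a + 1 : ℝ) ≤ (2:ℝ) ^ (a:ℝ) := by
    have := Nat.lt_two_pow_self (n := a)
    have : (a+1 : ℕ) ≤ 2 ^ a := this
    calc (a+1:ℝ) = ((a+1 : ℕ) : ℝ) := by push_cast; ring
    _ ≤ ((2^a : ℕ) : ℝ) := by exact_mod_cast this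
    _ = (2:ℝ) ^ (a:ℝ) := by rw [Real.rpow_natCast]; push_cast; ring
  have hkey : (2:ℝ) ^ (a:ℝ) ≤ (p:ℝ) ^ ((a:ℝ)/t) := by
    have := Real.rpow_le_rpow (by positivity) hp (le_of_lt (by positivity : (0:ℝ) < (a:ℝ)/t))
    rwa [← Real.rpow_mul (by norm_num), mul_comm t, div_mul_cancel₀] at this
    exact ne_of_gt htpos
  exact h2a.trans hkey

theorem stmt8 :
    ∃ C : ℝ, 0 < C ∧
      ∀ n : ℕ, 3 ≤ n →
        (dd n : ℝ) ≤ Real.exp (C * Real.log n / Real.log (Real.log n)) := by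
  refine ⟨1000, by norm_num, ?_⟩
  intro n hn
  have hn0 : n ≠ 0 := by omega
  have hn3 : (3:ℝ) ≤ (n:ℝ) := by exact_mod_cast hn
  have hnpos : (0:ℝ) < (n:ℝ) := by linarith
  set L := Real.log n with hLdef
  have hL1 : 1 < L := by
    have h3 : Real.exp 1 < 3 := lt_trans Real.exp_one_lt_d9 (by norm_num)
    calc (1:ℝ) = Real.log (Real.exp 1) := (Real.log_exp 1).symm
    _ < L := Real.log_lt_log (Real.exp_pos 1) (lt_of_lt_of_le h3 hn3)
  have hLpos : 0 < L := by linarith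
  set t := Real.log L with htdef
  have htpos : 0 < t := Real.log_pos hL1
  have hLe : L = Real.exp t := (Real.exp_log hLpos).symm
  by_cases hcase : t ≤ 1000
  · -- trivial case: d(n) ≤ n
    have hdn : (dd n : ℝ) ≤ (n:ℝ) := by
      have hh : dd n ≤ n := by
        have hsub : n.divisors ⊆ Finset.Icc 1 n := by
          intro d hd
          obtain ⟨hdvd, -⟩ := Nat.mem_divisors.mp hd
          have hd1 : 1 ≤ d := Nat.pos_of_dvd_of_pos hdvd (by omega)
          exact Finset.mem_Icc.mpr ⟨hd1, Nat.le_of_dvd (by omega) hdvd⟩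
        calc dd n ≤ (Finset.Icc 1 n).card := Finset.card_le_card hsub
        _ = n := by simp
      exact_mod_cast hh
    calc (dd n : ℝ) ≤ (n:ℝ) := hdn
    _ = Real.exp L := (Real.exp_log hnpos).symm
    _ ≤ Real.exp (1000 * L / t) := by
        apply Real.exp_le_exp.mpr
        rw [le_div_iff₀ htpos]; nlinarith
  · push_neg at hcase
    have ht1 : (1:ℝ) ≤ t := by linarith
    classical
    set P := n.primeFactors with hP
    set a : ℕ → ℕ := fun p => n.factorization p with ha
    -- step 1: dd n as a product
    have hdd : (dd n : ℝ) = ∏ p ∈ P, ((a p : ℝ) + 1) := by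
      rw [dd, Nat.card_divisors hn0]
      push_cast
      rfl
    -- pointwise bound
    have hpt : ∀ p ∈ P, ((a p : ℝ) + 1) ≤
        (if (p:ℝ) < (2:ℝ) ^ t then 2 * t else 1) * (p:ℝ) ^ ((a p : ℝ) / t) := by
      intro p hp
      have hprime : p.Prime := Nat.prime_of_mem_primeFactors hp
      have hp2 : 2 ≤ p := hprime.two_le
      split_ifs with hsmall
      · exact aux_small t ht1 (a p) p hp2
      · push_neg at hsmall
        have ha1 : 1 ≤ a p := (Nat.Prime.factorization_pos_of_dvd hprime hn0
          (Nat.dvd_of_mem_primeFactors hp))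
        rw [one_mul]
        exact aux_large t ht1 (a p) ha1 p hsmall
    have hprod : (dd n : ℝ) ≤
        ∏ p ∈ P, ((if (p:ℝ) < (2:ℝ) ^ t then 2 * t else 1) * (p:ℝ) ^ ((a p : ℝ) / t)) := by
      rw [hdd]
      exact Finset.prod_le_prod (fun p _ => by positivity) hpt
    -- split the product
    have hsplit : ∏ p ∈ P, ((if (p:ℝ) < (2:ℝ) ^ t then 2 * t else 1) * (p:ℝ) ^ ((a p : ℝ) / t))
        = (∏ p ∈ P, (if (p:ℝ) < (2:ℝ) ^ t then 2 * t else 1)) *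
          ∏ p ∈ P, (p:ℝ) ^ ((a p : ℝ) / t) := Finset.prod_mul_distrib
    set S := Finset.filter (fun p : ℕ => (p:ℝ) < (2:ℝ) ^ t) P with hS
    have hif : (∏ p ∈ P, (if (p:ℝ) < (2:ℝ) ^ t then 2 * t else 1)) = (2*t) ^ S.card := by
      rw [Finset.prod_ite, Finset.prod_const, Finset.prod_const, one_pow, mul_one]
    -- the rpow product equals n^(1/t)
    have hrpowprod : (∏ p ∈ P, (p:ℝ) ^ ((a p : ℝ) / t)) = (n:ℝ) ^ (1/t : ℝ) := by
      have h1 : ∀ p ∈ P, (p:ℝ) ^ ((a p : ℝ) / t) = ((p:ℝ) ^ (a p)) ^ (1/t : ℝ) := by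
        intro p hp
        rw [← Real.rpow_natCast (p:ℝ) (a p), ← Real.rpow_mul (by positivity)]
        congr 1; ring
      rw [Finset.prod_congr rfl h1, Real.finset_prod_rpow P _ (fun p _ => by positivity)]
      congr 1
      have := Nat.factorization_prod_pow_eq_self hn0
      rw [Finsupp.prod] at this
      rw [Nat.support_factorization] at this
      calc (∏ p ∈ P, ((p:ℝ)) ^ (a p)) = ((∏ p ∈ P, p ^ (a p) : ℕ) : ℝ) := by push_cast; rfl
      _ = (n:ℝ) := by rw [this]
    -- card bound
    have hcard : (S.card : ℝ) ≤ (2:ℝ) ^ t + 1 := by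
      have hsub : S ⊆ Finset.range (Nat.floor ((2:ℝ)^t) + 1) := by
        intro p hp
        obtain ⟨-, hlt⟩ := Finset.mem_filter.mp hp
        have hple : p ≤ Nat.floor ((2:ℝ)^t) := Nat.le_floor hlt.le
        exact Finset.mem_range.mpr (by omega)
      have h2 := Finset.card_le_card hsub
      rw [Finset.card_range] at h2
      have h3 : ((Nat.floor ((2:ℝ)^t) : ℕ) : ℝ) ≤ (2:ℝ)^t := Nat.floor_le (by positivity)
      calc (S.card : ℝ) ≤ ((Nat.floor ((2:ℝ)^t) + 1 : ℕ) : ℝ) := by exact_mod_cast h2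
      _ ≤ (2:ℝ)^t + 1 := by push_cast; linarith
    have h2t1 : (1:ℝ) ≤ 2*t := by linarith
    have hpow : ((2*t) : ℝ) ^ S.card ≤ (2*t) ^ ((2:ℝ)^t + 1) := by
      rw [← Real.rpow_natCast (2*t) S.card]
      exact Real.rpow_le_rpow_of_exponent_le h2t1 hcard
    -- combine
    set E := (2:ℝ)^t + 1 with hE
    have hcomb : (dd n : ℝ) ≤ (2*t) ^ E * (n:ℝ) ^ (1/t : ℝ) := by
      calc (dd n : ℝ) ≤ _ := hprod
      _ = (2*t) ^ S.card * (n:ℝ) ^ (1/t : ℝ) := by rw [hsplit, hif, hrpowprod]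
      _ ≤ (2*t) ^ E * (n:ℝ) ^ (1/t : ℝ) :=
          mul_le_mul_of_nonneg_right hpow (by positivity)
    -- rewrite RHS as exp
    have hrw : (2*t) ^ E * (n:ℝ) ^ (1/t : ℝ)
        = Real.exp (Real.log (2*t) * E + L / t) := by
      rw [Real.rpow_def_of_pos (by linarith : (0:ℝ) < 2*t),
          Real.rpow_def_of_pos hnpos, ← Real.exp_add]
      congr 1
      rw [← hLdef]; ring
    -- final numeric estimate
    have hlog2 : Real.log 2 < 0.7 := by
      have := Real.log_two_lt_d9; linarith
    have hlog2pos : (0:ℝ) < Real.log 2 := Real.log_pos (by norm_num)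
    have h2tpow : (2:ℝ)^t = Real.exp (Real.log 2 * t) := by
      rw [Real.rpow_def_of_pos (by norm_num)]
    have hlog2t : Real.log (2*t) ≤ 2*t := by
      have := Real.log_le_sub_one_of_pos (by linarith : (0:ℝ) < 2*t); linarith
    have hlog2tpos : 0 ≤ Real.log (2*t) := Real.log_nonneg (by linarith)
    have hcube : 0.001 * t^3 ≤ Real.exp ((1 - Real.log 2) * t) := by
      have hx : 0.1 * t ≤ Real.exp (0.1 * t) := by
        have := Real.add_one_le_exp (0.1 * t); linarith
      have h3 : Real.exp (0.3 * t) = (Real.exp (0.1 * t))^3 := by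
        rw [← Real.exp_nat_mul]; push_cast; ring_nf
      have h4 : (0.1*t)^3 ≤ (Real.exp (0.1*t))^3 :=
        pow_le_pow_left₀ (by linarith) hx 3
      have h5 : Real.exp (0.3*t) ≤ Real.exp ((1 - Real.log 2)*t) := by
        apply Real.exp_le_exp.mpr; nlinarith
      calc (0.001 : ℝ) * t^3 = (0.1*t)^3 := by ring
      _ ≤ (Real.exp (0.1*t))^3 := h4
      _ = Real.exp (0.3*t) := h3.symm
      _ ≤ Real.exp ((1 - Real.log 2)*t) := h5
    have hLfac : L = Real.exp ((1 - Real.log 2) * t) * Real.exp (Real.log 2 * t) := by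
      rw [hLe, ← Real.exp_add]; congr 1; ring
    have hexp1 : Real.log (2*t) * E * t + L ≤ 1000 * L := by
      have hEpos : (0:ℝ) ≤ E := by rw [hE]; positivity
      have hEbound : E ≤ 2 * Real.exp (Real.log 2 * t) := by
        rw [hE, h2tpow]
        have : (1:ℝ) ≤ Real.exp (Real.log 2 * t) := by
          rw [Real.one_le_exp_iff]; positivity
        linarith
      have hexp2pos : (0:ℝ) < Real.exp (Real.log 2 * t) := Real.exp_pos _
      have hkey : Real.log (2*t) * E * t ≤ 4 * t^2 * Real.exp (Real.log 2 * t) := by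
        calc Real.log (2*t) * E * t ≤ (2*t) * E * t := by
              apply mul_le_mul_of_nonneg_right _ (by linarith)
              exact mul_le_mul_of_nonneg_right hlog2t hEpos
        _ ≤ (2*t) * (2 * Real.exp (Real.log 2 * t)) * t := by
              apply mul_le_mul_of_nonneg_right _ (by linarith)
              exact mul_le_mul_of_nonneg_left hEbound (by linarith)
        _ = 4 * t^2 * Real.exp (Real.log 2 * t) := by ring
      have hnum : 4 * t^2 ≤ 999 * Real.exp ((1 - Real.log 2) * t) := by
        have h6 : (0.999:ℝ) * t^3 ≤ 999 * Real.exp ((1 - Real.log 2) * t) := by linarith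
        have h7 : (4:ℝ) ≤ 0.999 * t := by linarith
        have h8 : 4 * t^2 ≤ (0.999 * t) * t^2 :=
          mul_le_mul_of_nonneg_right h7 (sq_nonneg t)
        calc 4 * t^2 ≤ (0.999 * t) * t^2 := h8
        _ = 0.999 * t^3 := by ring
        _ ≤ 999 * Real.exp ((1 - Real.log 2) * t) := h6
      have hkey2 : 4 * t^2 * Real.exp (Real.log 2 * t) ≤ 999 * L := by
        calc 4 * t^2 * Real.exp (Real.log 2 * t)
            ≤ (999 * Real.exp ((1 - Real.log 2) * t)) * Real.exp (Real.log 2 * t) :=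
              mul_le_mul_of_nonneg_right hnum hexp2pos.le
        _ = 999 * L := by rw [hLfac]; ring
      linarith
    have hfin : Real.log (2*t) * E + L / t ≤ 1000 * L / t := by
      have heq : Real.log (2*t) * E + L / t = (Real.log (2*t) * E * t + L) / t := by
        field_simp
      rw [heq]
      gcongr
    calc (dd n : ℝ) ≤ (2*t) ^ E * (n:ℝ) ^ (1/t : ℝ) := hcomb
    _ = Real.exp (Real.log (2*t) * E + L / t) := hrw
    _ ≤ Real.exp (1000 * L / t) := Real.exp_le_exp.mpr hfin
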